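/- Set u(c) := c^{1−σ}/(1−σ) and H(p) := (σ/(1−σ)) ∑_{i∈F} p_i^{1−1/σ} for vectors p with p_i > 0 for i ∈ F. Let v : ℝⁿ₊ \ {0} → ℝ be continuously differentiable with ∂v/∂x_i(x) > 0 for all i ∈ F and all x ∈ ℝⁿ₊ \ {0}, and suppose v satisfies ρ v(x) = H(∇v(x)) + ⟨∇v(x), (D+Bᵀ)x⟩ + (⟨e,x⟩^{σ−1} − δ)⟨∇v(x), x⟩ for every x ∈ ℝⁿ₊ \ {0}. Let x ∈ ℝⁿ₊ \ {0} and let (c,X) be an admissible pair with ⟨e,X(s)⟩ > 0 for all s ≥ 0. Then for every t ≥ 0: v(x) = ∫₀ᵗ e^{−ρs} [ H(∇v(X(s))) − ∑_{i∈F} ( u(c_i(s)) − c_i(s)·∂v/∂x_i(X(s)) ) ] ds + ∫₀ᵗ e^{−ρs} ∑_{i∈F} u(c_i(s)) ds + e^{−ρt} v(X(t)). -/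

import Mathlib

set_option synthInstance.maxHeartbeats 1000000
set_option maxHeartbeats 2000000
set_option linter.unusedVariables false

open Matrix Finset MeasureTheory Set intervalIntegral

/-- The diagonal matrix of outflows: `D i i = -∑_{j ≠ i} B i j`. -/
noncomputable def Dmat {n : ℕ} (B : Matrix (Fin n) (Fin n) ℝ) : Matrix (Fin n) (Fin n) ℝ :=
  Matrix.diagonal fun i => -∑ j ∈ Finset.univ.erase i, B i j

/-- The continuous linear functional `y ↦ ∑ j, p j * y j` on `ℝⁿ`. -/
noncomputable def dotCLM {n : ℕ} (p : Fin n → ℝ) : (Fin n → ℝ) →L[ℝ] ℝ :=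
  LinearMap.toContinuousLinearMap
    { toFun := fun y => ∑ j, p j * y j
      map_add' := fun y z => by
        simp [Pi.add_apply, mul_add, Finset.sum_add_distrib]
      map_smul' := fun a y => by
        simp only [Pi.smul_apply, smul_eq_mul, RingHom.id_apply, Finset.mul_sum]
        exact Finset.sum_congr rfl fun j _ => by ring }

/-- An admissible pair for the spatial extraction model with saturation function `φ`:
a locally integrable, a.e. nonnegative control supported on `F`, and a nonnegative
trajectory starting from `x` solving (in integral form) the state equation. -/
def Admissible {n : ℕ} (B : Matrix (Fin n) (Fin n) ℝ) (F : Finset (Fin n)) (φ : ℝ → ℝ)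
    (x : Fin n → ℝ) (c X : ℝ → Fin n → ℝ) : Prop :=
  MeasureTheory.LocallyIntegrableOn c (Set.Ici 0) ∧
  (∀ᵐ t ∂(MeasureTheory.volume.restrict (Set.Ici (0 : ℝ))), ∀ i, 0 ≤ c t i) ∧
  (∀ t : ℝ, ∀ i, i ∉ F → c t i = 0) ∧
  ContinuousOn X (Set.Ici 0) ∧
  X 0 = x ∧
  (∀ t : ℝ, 0 ≤ t → ∀ i, 0 ≤ X t i) ∧
  (∀ t : ℝ, 0 ≤ t →
    X t = x + ∫ s in (0:ℝ)..t, ((φ (∑ i, X s i)) • X s + (Dmat B + B)ᵀ *ᵥ X s - c s))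

theorem dotCLM_apply {n : ℕ} (p y : Fin n → ℝ) : dotCLM p y = ∑ j, p j * y j := rfl

theorem chain_rule_ac {E : Type*} [NormedAddCommGroup E] [NormedSpace ℝ E]
    [CompleteSpace E]
    (v : E → ℝ) (P : E → (E →L[ℝ] ℝ)) (S C : Set E)
    (hv : ∀ y ∈ S, HasFDerivAt v (P y) y)
    (hP : ContinuousOn P S)
    (hCconv : Convex ℝ C) (hCcp : IsCompact C) (hCS : C ⊆ S)
    {t : ℝ} (ht : 0 ≤ t) {X g : ℝ → E}
    (hX : ContinuousOn X (Set.Icc 0 t))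
    (hg : MeasureTheory.IntegrableOn g (Set.Icc 0 t))
    (hXg : ∀ s ∈ Set.Icc 0 t, X s = X 0 + ∫ u in (0:ℝ)..s, g u)
    (hXC : ∀ s ∈ Set.Icc 0 t, X s ∈ C) :
    v (X t) = v (X 0) + ∫ s in (0:ℝ)..t, P (X s) (g s) := by
  have hPC : ContinuousOn P C := hP.mono hCS
  obtain ⟨Mp, hMp⟩ := hCcp.exists_bound_of_continuousOn hPC
  -- interval integrability of g on subintervals
  have hgI : ∀ a b : ℝ, a ∈ Icc 0 t → b ∈ Icc 0 t → IntervalIntegrable g volume a b := by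
    intro a b ha hb
    refine (hg.mono_set ?_).intervalIntegrable
    rw [← uIcc_of_le ht]
    exact uIcc_subset_uIcc (by rwa [uIcc_of_le ht]) (by rwa [uIcc_of_le ht])
  -- increments of X
  have hDelta : ∀ a b : ℝ, a ∈ Icc 0 t → b ∈ Icc 0 t →
      X b - X a = ∫ u in a..b, g u := by
    intro a b ha hb
    rw [hXg a ha, hXg b hb]
    have := integral_interval_sub_left (hgI 0 b (left_mem_Icc.2 ht) hb)
      (hgI 0 a (left_mem_Icc.2 ht) ha)
    rw [← this]; abel
  -- integrability of the main integrand
  have hPXcont : ContinuousOn (fun s => P (X s)) (Icc 0 t) :=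
    hP.comp hX fun s hs => hCS (hXC s hs)
  have hhapm : AEStronglyMeasurable (fun s => P (X s) (g s))
      (volume.restrict (Icc 0 t)) := by
    have h1 : AEStronglyMeasurable (fun s => P (X s)) (volume.restrict (Icc 0 t)) :=
      hPXcont.aestronglyMeasurable measurableSet_Icc
    have h2 := h1.prodMk hg.aestronglyMeasurable
    exact (isBoundedBilinearMap_apply.continuous).comp_aestronglyMeasurable h2
  have hhI : IntegrableOn (fun s => P (X s) (g s)) (Icc 0 t) := by
    refine Integrable.mono' (hg.norm.const_mul Mp) hhapm ?_
    filter_upwards [ae_restrict_mem measurableSet_Icc] with s hs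
    calc ‖P (X s) (g s)‖ ≤ ‖P (X s)‖ * ‖g s‖ := (P (X s)).le_opNorm _
      _ ≤ Mp * ‖g s‖ := by
        have := hMp _ (hXC s hs)
        exact mul_le_mul_of_nonneg_right this (norm_nonneg _)
  have hhII : ∀ a b : ℝ, a ∈ Icc 0 t → b ∈ Icc 0 t →
      IntervalIntegrable (fun s => P (X s) (g s)) volume a b := by
    intro a b ha hb
    refine (hhI.mono_set ?_).intervalIntegrable
    rw [← uIcc_of_le ht]
    exact uIcc_subset_uIcc (by rwa [uIcc_of_le ht]) (by rwa [uIcc_of_le ht])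
  -- reduce to an epsilon bound

  have key : ∀ ε' : ℝ, 0 < ε' →
      |v (X t) - v (X 0) - ∫ s in (0:ℝ)..t, P (X s) (g s)| ≤ ε' := by
    intro ε' hε'
    set M : ℝ := ∫ s in (0:ℝ)..t, ‖g s‖ with hMdef
    have hM0 : 0 ≤ M := intervalIntegral.integral_nonneg ht fun s _ => norm_nonneg _
    set ε : ℝ := ε' / (M + 1) with hεdef
    have hε : 0 < ε := div_pos hε' (by linarith)
    -- uniform continuity of P on C
    obtain ⟨dP, hdP, hdPP⟩ := Metric.uniformContinuousOn_iff.1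
      (hCcp.uniformContinuousOn_of_continuous hPC) ε hε
    -- uniform continuity of X on [0, t]
    obtain ⟨dX, hdX, hdXX⟩ := Metric.uniformContinuousOn_iff.1
      (isCompact_Icc.uniformContinuousOn_of_continuous hX) (dP / 2) (by linarith)
    -- choose a partition
    obtain ⟨N0, hN0⟩ := exists_nat_gt (t / dX)
    set N : ℕ := N0 + 1 with hNdef
    have hNpos : (0:ℝ) < N := by positivity
    have htN : t / N < dX := by
      rw [div_lt_iff₀ hNpos]
      have h1 : t / dX < N := lt_of_lt_of_le hN0 (by exact_mod_cast Nat.le_succ N0)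
      calc t = t / dX * dX := by field_simp
        _ < N * dX := by exact mul_lt_mul_of_pos_right h1 hdX
        _ = dX * N := by ring
    set a : ℕ → ℝ := fun k => k * t / N with hadef
    have ha0 : a 0 = 0 := by simp [hadef]
    have haN : a N = t := by
      simp only [hadef]; field_simp
    have hamem : ∀ k : ℕ, k ≤ N → a k ∈ Icc 0 t := by
      intro k hk
      constructor
      · positivity
      · rw [div_le_iff₀ hNpos]
        have : (k:ℝ) ≤ N := by exact_mod_cast hk
        calc (k:ℝ) * t ≤ N * t := mul_le_mul_of_nonneg_right this ht
          _ = t * N := by ring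
    have hastep : ∀ k : ℕ, a (k+1) - a k = t / N := by
      intro k; simp only [hadef]; push_cast; ring
    have hale : ∀ k : ℕ, a k ≤ a (k+1) := by
      intro k
      have := hastep k
      have h2 : 0 ≤ t / N := by positivity
      linarith
    -- telescoping
    have hsum1 : v (X t) - v (X 0) =
        ∑ k ∈ Finset.range N, (v (X (a (k+1))) - v (X (a k))) := by
      rw [Finset.sum_range_sub (fun k => v (X (a k)))]
      rw [ha0, haN]
    have hsum2 : (∫ s in (0:ℝ)..t, P (X s) (g s)) =
        ∑ k ∈ Finset.range N, ∫ s in (a k)..(a (k+1)), P (X s) (g s) := by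
      rw [intervalIntegral.sum_integral_adjacent_intervals (fun k hk =>
        hhII (a k) (a (k+1)) (hamem k (le_of_lt hk)) (hamem (k+1) hk))]
      rw [ha0, haN]
    have hsum3 : M = ∑ k ∈ Finset.range N, ∫ s in (a k)..(a (k+1)), ‖g s‖ := by
      rw [intervalIntegral.sum_integral_adjacent_intervals (fun k hk =>
        (hgI (a k) (a (k+1)) (hamem k (le_of_lt hk)) (hamem (k+1) hk)).norm)]
      rw [ha0, haN]
    -- per-interval estimate
    have hkey : ∀ k ∈ Finset.range N,
        |v (X (a (k+1))) - v (X (a k)) - ∫ s in (a k)..(a (k+1)), P (X s) (g s)|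
          ≤ ε * ∫ s in (a k)..(a (k+1)), ‖g s‖ := by
      intro k hk
      rw [Finset.mem_range] at hk
      set A := a k with hA
      set B := a (k+1) with hB
      have hAmem : A ∈ Icc 0 t := hamem k hk.le
      have hBmem : B ∈ Icc 0 t := hamem (k+1) hk
      have hAB : A ≤ B := hale k
      have hBA : B - A < dX := by rw [hastep k]; exact htN
      set Δ : E := ∫ u in A..B, g u with hΔdef
      have hΔ : X B - X A = Δ := hDelta A B hAmem hBmem
      set γ : ℝ → E := fun τ => X A + τ • Δ with hγdef
      have hγC : ∀ τ ∈ Icc (0:ℝ) 1, γ τ ∈ C := by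
        intro τ hτ
        have := hCconv.add_smul_sub_mem (hXC A hAmem) (hXC B hBmem) hτ
        rwa [hΔ] at this
      have hγcont : Continuous γ := by
        apply Continuous.add continuous_const
        exact continuous_id.smul continuous_const
      -- derivative of v along the segment
      have hd : ∀ τ ∈ Set.uIcc (0:ℝ) 1,
          HasDerivAt (fun τ => v (γ τ)) ((P (γ τ)) Δ) τ := by
        intro τ hτ
        rw [Set.uIcc_of_le zero_le_one] at hτ
        have h1 : HasDerivAt γ Δ τ := by
          have := ((hasDerivAt_id τ).smul_const Δ).const_add (X A)
          simpa [hγdef] using this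
        exact (hv _ (hCS (hγC τ hτ))).comp_hasDerivAt τ h1
      have hcont2 : ContinuousOn (fun τ => (P (γ τ)) Δ) (Icc (0:ℝ) 1) := by
        have h1 : ContinuousOn (fun τ => P (γ τ)) (Icc (0:ℝ) 1) :=
          hPC.comp hγcont.continuousOn fun τ hτ => hγC τ hτ
        exact h1.clm_apply continuousOn_const
      have hint2 : IntervalIntegrable (fun τ => (P (γ τ)) Δ) volume 0 1 := by
        apply ContinuousOn.intervalIntegrable
        rwa [Set.uIcc_of_le (zero_le_one : (0:ℝ) ≤ 1)]
      have hFTC : (∫ τ in (0:ℝ)..1, (P (γ τ)) Δ) = v (X B) - v (X A) := by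
        rw [intervalIntegral.integral_eq_sub_of_hasDerivAt hd hint2]
        congr 1
        · show v (γ 1) = v (X B)
          congr 1
          simp only [hγdef, one_smul, ← hΔ]; abel
        · show v (γ 0) = v (X A)
          congr 1
          simp [hγdef]
      have hgiAB := hgI A B hAmem hBmem
      have hhiAB := hhII A B hAmem hBmem
      have hGτ : ∀ τ : ℝ, IntervalIntegrable (fun s => (P (γ τ)) (g s)) volume A B := by
        intro τ
        rw [intervalIntegrable_iff] at hgiAB ⊢
        exact (P (γ τ)).integrable_comp hgiAB
      -- rewrite the error as a double integral bound
      have hrw : v (X B) - v (X A) - (∫ s in A..B, P (X s) (g s)) =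
          ∫ τ in (0:ℝ)..1, ((P (γ τ)) Δ - ∫ s in A..B, P (X s) (g s)) := by
        rw [intervalIntegral.integral_sub hint2 intervalIntegrable_const, hFTC]
        simp
      rw [hrw]
      have hbound : ∀ τ ∈ Set.uIoc (0:ℝ) 1,
          ‖(P (γ τ)) Δ - ∫ s in A..B, P (X s) (g s)‖
            ≤ ε * ∫ s in A..B, ‖g s‖ := by
        intro τ hτ
        rw [Set.uIoc_of_le (zero_le_one : (0:ℝ) ≤ 1)] at hτ
        have hτI : τ ∈ Icc (0:ℝ) 1 := ⟨hτ.1.le, hτ.2⟩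
        have h1 : (P (γ τ)) Δ = ∫ s in A..B, (P (γ τ)) (g s) :=
          ((P (γ τ)).intervalIntegral_comp_comm hgiAB).symm
        rw [h1, ← intervalIntegral.integral_sub (hGτ τ) hhiAB]
        have h2 := intervalIntegral.norm_integral_le_integral_norm
          (f := fun s => (P (γ τ)) (g s) - P (X s) (g s)) (μ := volume) hAB
        refine h2.trans ?_
        rw [← intervalIntegral.integral_const_mul]
        refine intervalIntegral.integral_mono_on hAB ((hGτ τ).sub hhiAB).norm
          ((hgiAB.norm).const_mul ε) ?_
        intro s hs
        have hsI : s ∈ Icc 0 t :=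
          ⟨hAmem.1.trans hs.1, hs.2.trans hBmem.2⟩
        -- distance estimate
        have hd1 : dist (γ τ) (X A) ≤ dist (X B) (X A) := by
          rw [dist_eq_norm, dist_eq_norm, hΔ]
          have hγτ : γ τ - X A = τ • Δ := by simp [hγdef]
          rw [hγτ, norm_smul]
          have hτn : ‖τ‖ ≤ 1 := by
            rw [Real.norm_eq_abs, abs_of_nonneg hτI.1]; exact hτI.2
          calc ‖τ‖ * ‖Δ‖ ≤ 1 * ‖Δ‖ :=
            mul_le_mul_of_nonneg_right hτn (norm_nonneg _)
            _ = ‖Δ‖ := one_mul _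
        have hdBA : dist (X B) (X A) < dP / 2 := by
          apply hdXX B hBmem A hAmem
          rw [Real.dist_eq, abs_of_nonneg (by linarith : (0:ℝ) ≤ B - A)]
          exact hBA
        have hdAs : dist (X A) (X s) < dP / 2 := by
          apply hdXX A hAmem s hsI
          rw [Real.dist_eq, abs_of_nonpos (by linarith [hs.1] : A - s ≤ 0)]
          have : s - A ≤ B - A := by linarith [hs.2]
          linarith
        have hdist : dist (γ τ) (X s) < dP := by
          calc dist (γ τ) (X s) ≤ dist (γ τ) (X A) + dist (X A) (X s) :=
            dist_triangle _ _ _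
            _ < dP / 2 + dP / 2 := by
              exact add_lt_add_of_le_of_lt (hd1.trans hdBA.le) hdAs
            _ = dP := by ring
        have hPdist : ‖P (γ τ) - P (X s)‖ ≤ ε := by
          have := hdPP (γ τ) (hγC τ hτI) (X s) (hXC s hsI) hdist
          rw [dist_eq_norm] at this
          exact this.le
        calc ‖(P (γ τ)) (g s) - P (X s) (g s)‖
            = ‖(P (γ τ) - P (X s)) (g s)‖ := by
              rw [ContinuousLinearMap.sub_apply]
          _ ≤ ‖P (γ τ) - P (X s)‖ * ‖g s‖ := (P (γ τ) - P (X s)).le_opNorm _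
          _ ≤ ε * ‖g s‖ := mul_le_mul_of_nonneg_right hPdist (norm_nonneg _)
          _ = (fun s => ε * ‖g s‖) s := rfl
      have := intervalIntegral.norm_integral_le_of_norm_le_const hbound
      simp only [Real.norm_eq_abs] at this ⊢
      calc |∫ τ in (0:ℝ)..1, ((P (γ τ)) Δ - ∫ s in A..B, P (X s) (g s))|
          ≤ (ε * ∫ s in A..B, ‖g s‖) * |1 - 0| := this
        _ = ε * ∫ s in A..B, ‖g s‖ := by norm_num
    -- put everything together
    calc |v (X t) - v (X 0) - ∫ s in (0:ℝ)..t, P (X s) (g s)|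
        = |∑ k ∈ Finset.range N, (v (X (a (k+1))) - v (X (a k))
            - ∫ s in (a k)..(a (k+1)), P (X s) (g s))| := by
          rw [Finset.sum_sub_distrib, ← hsum1, ← hsum2]
      _ ≤ ∑ k ∈ Finset.range N, |v (X (a (k+1))) - v (X (a k))
            - ∫ s in (a k)..(a (k+1)), P (X s) (g s)| :=
          Finset.abs_sum_le_sum_abs _ _
      _ ≤ ∑ k ∈ Finset.range N, ε * ∫ s in (a k)..(a (k+1)), ‖g s‖ :=
          Finset.sum_le_sum hkey
      _ = ε * M := by rw [← Finset.mul_sum, ← hsum3]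
      _ ≤ ε * (M + 1) := by nlinarith
      _ = ε' := by
          rw [hεdef]; field_simp
  have h0 : |v (X t) - v (X 0) - ∫ s in (0:ℝ)..t, P (X s) (g s)| ≤ 0 := by
    refine le_of_forall_pos_le_add fun ε hε => ?_
    simpa using key ε hε
  have := abs_nonpos_iff.mp (h0)
  linarith [this]


/-- The fundamental identity: any classical solution `v` of the planner's HJB equation in
framework (S2)(U1), with gradient `p`, satisfies, along any admissible pair `(c, X)` with
positive total mass, the identity
`v(x) = ∫₀ᵗ e^{−ρs}[H(∇v(X)) − h(c, ∇v(X))] ds + ∫₀ᵗ e^{−ρs} ∑_{i∈F} u(c_i) ds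
 + e^{−ρt} v(X(t))` for every `t ≥ 0`. -/
theorem stmt17 {n : ℕ} (B : Matrix (Fin n) (Fin n) ℝ)
    (hB : ∀ i j, 0 ≤ B i j) (hdiag : ∀ i, B i i = 0)
    (F : Finset (Fin n)) (hF : F.Nonempty)
    (σ δ ρ : ℝ) (hσ0 : 0 < σ) (hσ1 : σ < 1) (hδ : 0 < δ)
    (v : (Fin n → ℝ) → ℝ) (p : (Fin n → ℝ) → Fin n → ℝ)
    (hppos : ∀ y : Fin n → ℝ, (∀ i, 0 ≤ y i) → y ≠ 0 → ∀ i ∈ F, 0 < p y i)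
    (hderiv : ∀ y : Fin n → ℝ, (∀ i, 0 ≤ y i) → y ≠ 0 → HasFDerivAt v (dotCLM (p y)) y)
    (hpcont : ContinuousOn p {y : Fin n → ℝ | (∀ i, 0 ≤ y i) ∧ y ≠ 0})
    (hHJB : ∀ y : Fin n → ℝ, (∀ i, 0 ≤ y i) → y ≠ 0 →
      ρ * v y = (σ / (1 - σ)) * (∑ i ∈ F, (p y i) ^ (1 - 1 / σ))
        + (∑ j, p y j * (((Dmat B + B)ᵀ *ᵥ y) j))
        + ((∑ j, y j) ^ (σ - 1) - δ) * (∑ j, p y j * y j))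
    (x : Fin n → ℝ) (hx : ∀ i, 0 ≤ x i) (hx0 : x ≠ 0)
    (c X : ℝ → Fin n → ℝ)
    (hadm : Admissible B F (fun m => m ^ (σ - 1) - δ) x c X)
    (hXpos : ∀ s : ℝ, 0 ≤ s → 0 < ∑ i, X s i) :
    ∀ t : ℝ, 0 ≤ t →
      v x = (∫ s in (0:ℝ)..t, Real.exp (-ρ * s) *
              ((σ / (1 - σ)) * (∑ i ∈ F, (p (X s) i) ^ (1 - 1 / σ))
                - ∑ i ∈ F, ((c s i) ^ (1 - σ) / (1 - σ) - c s i * p (X s) i)))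
        + (∫ s in (0:ℝ)..t, Real.exp (-ρ * s) * ∑ i ∈ F, (c s i) ^ (1 - σ) / (1 - σ))
        + Real.exp (-ρ * t) * v (X t) := by
  obtain ⟨hcLI, hc0, hcF, hXcont, hX0, hXnn, hXeq⟩ := hadm
  intro t ht
  have hσ1' : (0:ℝ) < 1 - σ := by linarith
  -- the state space
  set S : Set (Fin n → ℝ) := {y | (∀ i, 0 ≤ y i) ∧ 0 < ∑ i, y i} with hSdef
  have hSne : ∀ y ∈ S, y ≠ 0 := by
    intro y hy h0
    have := hy.2
    rw [h0] at this
    simp at this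
  have hSsub : S ⊆ {y : Fin n → ℝ | (∀ i, 0 ≤ y i) ∧ y ≠ 0} :=
    fun y hy => ⟨hy.1, hSne y hy⟩
  have hXS : ∀ s ∈ Icc (0:ℝ) t, X s ∈ S := fun s hs => ⟨hXnn s hs.1, hXpos s hs.1⟩
  -- basic continuity facts
  have hXc : ContinuousOn X (Icc 0 t) := hXcont.mono Icc_subset_Ici_self
  have hmcont : ContinuousOn (fun s => ∑ i, X s i) (Icc (0:ℝ) t) :=
    (continuous_finset_sum Finset.univ fun i _ => continuous_apply i).comp_continuousOn hXc
  have hφcont : ContinuousOn (fun s => (∑ i, X s i) ^ (σ - 1) - δ) (Icc (0:ℝ) t) :=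
    (hmcont.rpow_const fun s hs => Or.inl (ne_of_gt (hXpos s hs.1))).sub continuousOn_const
  have hAcont : Continuous (fun y : Fin n → ℝ => (Dmat B + B)ᵀ *ᵥ y) := by
    have : (fun y : Fin n → ℝ => (Dmat B + B)ᵀ *ᵥ y) =
        fun y i => ∑ j, (Dmat B + B)ᵀ i j * y j := by
      funext y i; simp [Matrix.mulVec, dotProduct]
    rw [this]
    exact continuous_pi fun i =>
      continuous_finset_sum Finset.univ fun j _ => continuous_const.mul (continuous_apply j)
  -- the velocity field
  set g : ℝ → Fin n → ℝ := fun s =>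
    (fun m => m ^ (σ - 1) - δ) (∑ i, X s i) • X s + (Dmat B + B)ᵀ *ᵥ X s - c s with hgdef
  have hcI : IntegrableOn c (Icc 0 t) volume :=
    hcLI.integrableOn_compact_subset Icc_subset_Ici_self isCompact_Icc
  have hcontpart : ContinuousOn
      (fun s => (fun m => m ^ (σ - 1) - δ) (∑ i, X s i) • X s + (Dmat B + B)ᵀ *ᵥ X s)
      (Icc (0:ℝ) t) :=
    (hφcont.smul hXc).add (hAcont.comp_continuousOn hXc)
  have hgI : IntegrableOn g (Icc 0 t) volume :=
    (hcontpart.integrableOn_compact isCompact_Icc).sub hcI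
  have hXg : ∀ s ∈ Icc (0:ℝ) t, X s = X 0 + ∫ u in (0:ℝ)..s, g u := by
    intro s hs
    rw [hXeq s hs.1, hX0]
  -- continuity of P := dotCLM ∘ p on S
  have hdotcont : Continuous (dotCLM : (Fin n → ℝ) → ((Fin n → ℝ) →L[ℝ] ℝ)) := by
    have : IsLinearMap ℝ (dotCLM : (Fin n → ℝ) → ((Fin n → ℝ) →L[ℝ] ℝ)) := by
      constructor
      · intro p q; ext y
        simp only [dotCLM_apply, ContinuousLinearMap.add_apply, Pi.add_apply, add_mul,
          Finset.sum_add_distrib]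
      · intro a q; ext y
        simp only [dotCLM_apply, ContinuousLinearMap.smul_apply, Pi.smul_apply, smul_eq_mul,
          Finset.mul_sum]
        exact Finset.sum_congr rfl fun j _ => by ring
    exact LinearMap.continuous_of_finiteDimensional (this.mk' _)
  set P : (Fin n → ℝ) → ((Fin n → ℝ) →L[ℝ] ℝ) := fun y => dotCLM (p y) with hPdef
  have hPcont : ContinuousOn P S :=
    hdotcont.comp_continuousOn (hpcont.mono hSsub)
  have hvS : ∀ y ∈ S, HasFDerivAt v (P y) y := fun y hy =>
    hderiv y hy.1 (hSne y hy)
  -- a compact convex set containing the trajectory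
  have hKcp : IsCompact (X '' Icc 0 t) := isCompact_Icc.image_of_continuousOn hXc
  obtain ⟨R, hR⟩ := hKcp.isBounded.subset_closedBall 0
  obtain ⟨s₀, hs₀, hmin⟩ := isCompact_Icc.exists_isMinOn ⟨0, left_mem_Icc.2 ht⟩ hmcont
  set m : ℝ := ∑ i, X s₀ i with hmdef
  have hm : 0 < m := hXpos s₀ hs₀.1
  set C : Set (Fin n → ℝ) :=
    Metric.closedBall 0 R ∩ ({y | ∀ i, 0 ≤ y i} ∩ {y | m ≤ ∑ i, y i}) with hCdef
  have hC1closed : IsClosed {y : Fin n → ℝ | ∀ i, 0 ≤ y i} := by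
    have : {y : Fin n → ℝ | ∀ i, 0 ≤ y i} = ⋂ i, {y | 0 ≤ y i} := by
      ext y; simp
    rw [this]
    exact isClosed_iInter fun i => isClosed_le continuous_const (continuous_apply i)
  have hC2closed : IsClosed {y : Fin n → ℝ | m ≤ ∑ i, y i} :=
    isClosed_le continuous_const (continuous_finset_sum Finset.univ fun i _ => continuous_apply i)
  have hCcp : IsCompact C :=
    (isCompact_closedBall 0 R).inter_right (hC1closed.inter hC2closed)
  have hCconv : Convex ℝ C := by
    refine (convex_closedBall 0 R).inter (Convex.inter ?_ ?_)
    · intro y hy z hz a b ha hb hab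
      intro i
      have := hy i; have := hz i
      simp only [Pi.add_apply, Pi.smul_apply, smul_eq_mul]
      positivity
    · intro y hy z hz a b ha hb hab
      simp only [Set.mem_setOf_eq, Pi.add_apply, Pi.smul_apply, smul_eq_mul] at hy hz ⊢
      rw [Finset.sum_add_distrib, ← Finset.mul_sum, ← Finset.mul_sum]
      nlinarith [hy, hz]
  have hCS : C ⊆ S := by
    intro y hy
    exact ⟨hy.2.1, lt_of_lt_of_le hm hy.2.2⟩
  have hXC : ∀ s ∈ Icc (0:ℝ) t, X s ∈ C := by
    intro s hs
    refine ⟨hR ⟨s, hs, rfl⟩, hXnn s hs.1, ?_⟩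
    exact hmin hs
  -- the first chain rule application
  have hvX : ∀ r ∈ Icc (0:ℝ) t, v (X r) = v (X 0) + ∫ s in (0:ℝ)..r, P (X s) (g s) := by
    intro r hr
    exact chain_rule_ac v P S C hvS hPcont hCconv hCcp hCS hr.1
      (hXc.mono (Icc_subset_Icc le_rfl hr.2))
      (hgI.mono_set (Icc_subset_Icc le_rfl hr.2))
      (fun s hs => hXg s ⟨hs.1, hs.2.trans hr.2⟩)
      (fun s hs => hXC s ⟨hs.1, hs.2.trans hr.2⟩)
  -- integrability of q
  set q : ℝ → ℝ := fun s => P (X s) (g s) with hqdef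
  have hpXc : ContinuousOn (fun s => p (X s)) (Icc (0:ℝ) t) :=
    hpcont.comp hXc fun s hs => hSsub (hXS s hs)
  have hPXc : ContinuousOn (fun s => P (X s)) (Icc (0:ℝ) t) :=
    hPcont.comp hXc hXS
  obtain ⟨Mq, hMq⟩ := isCompact_Icc.exists_bound_of_continuousOn hPXc
  have hqI : IntegrableOn q (Icc 0 t) volume := by
    have h1 : AEStronglyMeasurable (fun s => P (X s)) (volume.restrict (Icc (0:ℝ) t)) :=
      hPXc.aestronglyMeasurable measurableSet_Icc
    have h2 := h1.prodMk hgI.aestronglyMeasurable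
    have hqm : AEStronglyMeasurable q (volume.restrict (Icc (0:ℝ) t)) :=
      (isBoundedBilinearMap_apply.continuous).comp_aestronglyMeasurable h2
    refine Integrable.mono' (hgI.norm.const_mul Mq) hqm ?_
    filter_upwards [ae_restrict_mem measurableSet_Icc] with s hs
    calc ‖q s‖ ≤ ‖P (X s)‖ * ‖g s‖ := (P (X s)).le_opNorm _
      _ ≤ Mq * ‖g s‖ := mul_le_mul_of_nonneg_right (hMq s hs) (norm_nonneg _)
  -- second application: the pair (e^{-ρ s}, v (X s))
  set W : ℝ → ℝ × ℝ := fun s => (Real.exp (-ρ * s), v (X s)) with hWdef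
  set g₂ : ℝ → ℝ × ℝ := fun s => (-ρ * Real.exp (-ρ * s), q s) with hg₂def
  set P₂ : ℝ × ℝ → (ℝ × ℝ →L[ℝ] ℝ) := fun y =>
    y.1 • (ContinuousLinearMap.snd ℝ ℝ ℝ) + y.2 • (ContinuousLinearMap.fst ℝ ℝ ℝ) with hP₂def
  have hv₂ : ∀ y ∈ (Set.univ : Set (ℝ × ℝ)), HasFDerivAt (fun z : ℝ × ℝ => z.1 * z.2) (P₂ y) y := by
    intro y _
    exact (hasFDerivAt_fst (p := y)).mul (hasFDerivAt_snd (p := y))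
  have hP₂cont : ContinuousOn P₂ Set.univ := by
    apply Continuous.continuousOn
    exact (continuous_fst.smul continuous_const).add (continuous_snd.smul continuous_const)
  have hvcont : ContinuousOn (fun s => v (X s)) (Icc (0:ℝ) t) := by
    intro s hs
    exact ((hderiv (X s) (hXnn s hs.1) (hSne _ (hXS s hs))).continuousAt).comp_continuousWithinAt
      (hXc s hs)
  have hWc : ContinuousOn W (Icc 0 t) := by
    apply ContinuousOn.prodMk
    · exact (Real.continuous_exp.comp (continuous_const.mul continuous_id)).continuousOn
    · exact hvcont
  have hexp : ∀ u : ℝ, HasDerivAt (fun w => Real.exp (-ρ * w)) (-ρ * Real.exp (-ρ * u)) u := by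
    intro u
    have h1 : HasDerivAt (fun w : ℝ => -ρ * w) (-ρ) u := by
      simpa using (hasDerivAt_id u).const_mul (-ρ)
    have := (Real.hasDerivAt_exp (-ρ * u)).comp u h1
    simpa [Function.comp_def, mul_comm] using this
  have hexpc : Continuous (fun u : ℝ => -ρ * Real.exp (-ρ * u)) :=
    continuous_const.mul (Real.continuous_exp.comp (continuous_const.mul continuous_id))
  have hg₂I : IntegrableOn g₂ (Icc 0 t) volume :=
    ((hexpc.continuousOn).integrableOn_compact isCompact_Icc).prodMk hqI
  have hWg : ∀ s ∈ Icc (0:ℝ) t, W s = W 0 + ∫ u in (0:ℝ)..s, g₂ u := by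
    intro s hs
    have hii : IntervalIntegrable g₂ volume 0 s := by
      refine (hg₂I.mono_set ?_).intervalIntegrable
      rw [uIcc_of_le hs.1]
      exact Icc_subset_Icc le_rfl hs.2
    have h1 : (∫ u in (0:ℝ)..s, g₂ u).1 = ∫ u in (0:ℝ)..s, -ρ * Real.exp (-ρ * u) := by
      have := (ContinuousLinearMap.fst ℝ ℝ ℝ).intervalIntegral_comp_comm hii
      exact this.symm
    have h2 : (∫ u in (0:ℝ)..s, g₂ u).2 = ∫ u in (0:ℝ)..s, q u := by
      have := (ContinuousLinearMap.snd ℝ ℝ ℝ).intervalIntegral_comp_comm hii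
      exact this.symm
    have hexpint : (∫ u in (0:ℝ)..s, -ρ * Real.exp (-ρ * u))
        = Real.exp (-ρ * s) - Real.exp (-ρ * 0) :=
      intervalIntegral.integral_eq_sub_of_hasDerivAt (fun u _ => hexp u)
        (hexpc.intervalIntegrable 0 s)
    apply Prod.ext
    · show Real.exp (-ρ * s) = Real.exp (-ρ * 0) + (∫ u in (0:ℝ)..s, g₂ u).1
      rw [h1, hexpint]; ring
    · show v (X s) = v (X 0) + (∫ u in (0:ℝ)..s, g₂ u).2
      rw [h2]
      exact hvX s hs
  obtain ⟨R₂, hR₂⟩ := (isCompact_Icc.image_of_continuousOn hWc).isBounded.subset_closedBall 0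
  have hmain := chain_rule_ac (fun z : ℝ × ℝ => z.1 * z.2) P₂ Set.univ
    (Metric.closedBall 0 R₂) hv₂ hP₂cont (convex_closedBall 0 R₂)
    (isCompact_closedBall 0 R₂) (Set.subset_univ _) ht hWc hg₂I hWg
    (fun s hs => hR₂ ⟨s, hs, rfl⟩)
  -- pointwise identification of the integrand
  set Hf : ℝ → ℝ := fun s => (σ / (1 - σ)) * (∑ i ∈ F, (p (X s) i) ^ (1 - 1 / σ)) with hHfdef
  set T : ℝ → ℝ := fun s => Real.exp (-ρ * s) * (Hf s + ∑ i ∈ F, c s i * p (X s) i) with hTdef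
  have hq_eq : ∀ s ∈ Icc (0:ℝ) t,
      q s = ρ * v (X s) - Hf s - ∑ i ∈ F, c s i * p (X s) i := by
    intro s hs
    have hy0 : ∀ i, 0 ≤ X s i := hXnn s hs.1
    have hyne : X s ≠ 0 := hSne _ (hXS s hs)
    have hgs : ∀ j, g s j = ((∑ i, X s i) ^ (σ - 1) - δ) * X s j
        + ((Dmat B + B)ᵀ *ᵥ X s) j - c s j := by
      intro j
      simp [hgdef, Pi.add_apply, Pi.sub_apply, Pi.smul_apply, smul_eq_mul]
    have e1 : q s = ∑ j, p (X s) j * g s j := rfl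
    have e2 : ∑ j, p (X s) j * g s j
        = ((∑ i, X s i) ^ (σ - 1) - δ) * (∑ j, p (X s) j * X s j)
          + (∑ j, p (X s) j * ((Dmat B + B)ᵀ *ᵥ X s) j)
          - ∑ j, p (X s) j * c s j := by
      have hterm : ∀ j : Fin n, p (X s) j * g s j
          = ((∑ i, X s i) ^ (σ - 1) - δ) * (p (X s) j * X s j)
            + p (X s) j * ((Dmat B + B)ᵀ *ᵥ X s) j
            - p (X s) j * c s j := by
        intro j; rw [hgs j]; ring
      rw [Finset.sum_congr rfl fun j _ => hterm j]
      rw [Finset.sum_sub_distrib, Finset.sum_add_distrib, ← Finset.mul_sum]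
    have e3 : ∑ j, p (X s) j * c s j = ∑ i ∈ F, c s i * p (X s) i := by
      rw [← Finset.sum_subset F.subset_univ (fun j _ hj => by rw [hcF s j hj, mul_zero])]
      exact Finset.sum_congr rfl fun j _ => mul_comm _ _
    have e4 := hHJB (X s) hy0 hyne
    rw [e1, e2, e3]
    rw [hHfdef]
    linarith [e4]
  have hinteq : Set.EqOn (fun s => P₂ (W s) (g₂ s)) (fun s => -(T s)) (Set.uIcc 0 t) := by
    rw [Set.uIcc_of_le ht]
    intro s hs
    show P₂ (W s) (g₂ s) = -(T s)
    have happ : P₂ (W s) (g₂ s) = (W s).1 * (g₂ s).2 + (W s).2 * (g₂ s).1 := by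
      simp [hP₂def, ContinuousLinearMap.add_apply, ContinuousLinearMap.smul_apply,
        smul_eq_mul]
    rw [happ]
    have h1 : (W s).1 = Real.exp (-ρ * s) := rfl
    have h2 : (W s).2 = v (X s) := rfl
    have h3 : (g₂ s).1 = -ρ * Real.exp (-ρ * s) := rfl
    have h4 : (g₂ s).2 = q s := rfl
    rw [h1, h2, h3, h4, hq_eq s hs, hTdef]
    ring
  have hIeq : (∫ s in (0:ℝ)..t, P₂ (W s) (g₂ s)) = -∫ s in (0:ℝ)..t, T s := by
    rw [intervalIntegral.integral_congr hinteq, intervalIntegral.integral_neg]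
  have hmain' : Real.exp (-ρ * t) * v (X t) = v x - ∫ s in (0:ℝ)..t, T s := by
    rw [hIeq] at hmain
    have h1 : (fun z : ℝ × ℝ => z.1 * z.2) (W t) = Real.exp (-ρ * t) * v (X t) := rfl
    have h2 : (fun z : ℝ × ℝ => z.1 * z.2) (W 0) = Real.exp (-ρ * 0) * v (X 0) := rfl
    rw [show (W t).1 * (W t).2 = _ from h1, show (W 0).1 * (W 0).2 = _ from h2] at hmain
    rw [hX0] at hmain
    have h3 : Real.exp (-ρ * 0) = 1 := by norm_num
    rw [h3, one_mul] at hmain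
    linarith [hmain]
  -- integrability of the pieces
  have toII : ∀ {f : ℝ → ℝ}, IntegrableOn f (Icc 0 t) volume →
      IntervalIntegrable f volume 0 t := by
    intro f h
    apply MeasureTheory.IntegrableOn.intervalIntegrable
    rwa [Set.uIcc_of_le ht]
  have hmulI : ∀ (h w : ℝ → ℝ), ContinuousOn h (Icc 0 t) →
      IntegrableOn w (Icc 0 t) volume →
      IntegrableOn (fun s => h s * w s) (Icc 0 t) volume := by
    intro h w hh hw
    obtain ⟨Mh, hMh⟩ := isCompact_Icc.exists_bound_of_continuousOn hh
    refine Integrable.mono' (hw.norm.const_mul Mh) ?_ ?_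
    · exact (hh.aestronglyMeasurable measurableSet_Icc).mul hw.aestronglyMeasurable
    · filter_upwards [ae_restrict_mem measurableSet_Icc] with s hs
      rw [norm_mul]
      exact mul_le_mul_of_nonneg_right (hMh s hs) (norm_nonneg _)
  have hciI : ∀ i : Fin n, IntegrableOn (fun s => c s i) (Icc 0 t) volume := by
    intro i
    exact (ContinuousLinearMap.proj (R := ℝ) (φ := fun _ : Fin n => ℝ) i).integrable_comp hcI
  have hexpc2 : ContinuousOn (fun s : ℝ => Real.exp (-ρ * s)) (Icc 0 t) :=
    (Real.continuous_exp.comp (continuous_const.mul continuous_id)).continuousOn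
  have hHfc : ContinuousOn Hf (Icc (0:ℝ) t) := by
    rw [hHfdef]
    apply ContinuousOn.mul continuousOn_const
    apply continuousOn_finset_sum
    intro i hi
    exact ((continuous_apply i).comp_continuousOn hpXc).rpow_const
      (fun s hs => Or.inl (ne_of_gt (hppos (X s) (hXnn s hs.1) (hSne _ (hXS s hs)) i hi)))
  have hTii : IntervalIntegrable T volume 0 t := by
    apply toII
    have h1 : IntegrableOn (fun s => Real.exp (-ρ * s) * Hf s) (Icc 0 t) volume :=
      ((hexpc2.mul hHfc).integrableOn_compact isCompact_Icc)
    have h2 : IntegrableOn (fun s => Real.exp (-ρ * s) * ∑ i ∈ F, c s i * p (X s) i)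
        (Icc 0 t) volume := by
      have heq : (fun s => Real.exp (-ρ * s) * ∑ i ∈ F, c s i * p (X s) i)
          = fun s => ∑ i ∈ F, (Real.exp (-ρ * s) * p (X s) i) * c s i := by
        funext s
        rw [Finset.mul_sum]
        exact Finset.sum_congr rfl fun i _ => by ring
      rw [heq]
      apply integrable_finset_sum
      intro i _
      exact hmulI _ _ (hexpc2.mul ((continuous_apply i).comp_continuousOn hpXc)) (hciI i)
    have heqT : T = fun s => Real.exp (-ρ * s) * Hf s
        + Real.exp (-ρ * s) * ∑ i ∈ F, c s i * p (X s) i := by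
      funext s; rw [hTdef]; ring
    rw [heqT]
    exact h1.add h2
  have hc0' : ∀ᵐ s ∂(volume.restrict (Icc (0:ℝ) t)), ∀ i, 0 ≤ c s i :=
    ae_restrict_of_ae_restrict_of_subset Icc_subset_Ici_self hc0
  have hcirp : ∀ i : Fin n, IntegrableOn (fun s => (c s i) ^ (1 - σ)) (Icc 0 t) volume := by
    intro i
    have hmeas : AEStronglyMeasurable (fun s => (c s i) ^ (1 - σ))
        (volume.restrict (Icc (0:ℝ) t)) :=
      (Real.continuous_rpow_const (le_of_lt hσ1')).comp_aestronglyMeasurable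
        (hciI i).aestronglyMeasurable
    have hbound : Integrable (fun s => 1 + c s i) (volume.restrict (Icc (0:ℝ) t)) := by
      refine Integrable.add ?_ (hciI i)
      refine integrableOn_const ?_
      rw [Real.volume_Icc]
      exact ENNReal.ofReal_ne_top
    refine Integrable.mono' hbound hmeas ?_
    filter_upwards [hc0'] with s hcs
    have h0 : 0 ≤ c s i := hcs i
    rw [Real.norm_eq_abs, abs_of_nonneg (Real.rpow_nonneg h0 _)]
    rcases le_total (c s i) 1 with h | h
    · have := Real.rpow_le_one h0 h (le_of_lt hσ1')
      linarith
    · have h2 : (c s i) ^ (1 - σ) ≤ (c s i) ^ (1:ℝ) :=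
        Real.rpow_le_rpow_of_exponent_le h (by linarith)
      rw [Real.rpow_one] at h2
      linarith
  have hUii : IntervalIntegrable
      (fun s => Real.exp (-ρ * s) * ∑ i ∈ F, (c s i) ^ (1 - σ) / (1 - σ)) volume 0 t := by
    apply toII
    have heq : (fun s => Real.exp (-ρ * s) * ∑ i ∈ F, (c s i) ^ (1 - σ) / (1 - σ))
        = fun s => ∑ i ∈ F, (Real.exp (-ρ * s) / (1 - σ)) * ((c s i) ^ (1 - σ)) := by
      funext s
      rw [Finset.mul_sum]
      exact Finset.sum_congr rfl fun i _ => by ring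
    rw [heq]
    apply integrable_finset_sum
    intro i _
    exact hmulI _ _ (hexpc2.div_const _) (hcirp i)
  -- final assembly
  have hsplit : (fun s => Real.exp (-ρ * s) *
        ((σ / (1 - σ)) * (∑ i ∈ F, (p (X s) i) ^ (1 - 1 / σ))
          - ∑ i ∈ F, ((c s i) ^ (1 - σ) / (1 - σ) - c s i * p (X s) i)))
      = fun s => T s - Real.exp (-ρ * s) * ∑ i ∈ F, (c s i) ^ (1 - σ) / (1 - σ) := by
    funext s
    rw [hTdef, hHfdef, Finset.sum_sub_distrib]
    ring
  rw [hsplit, intervalIntegral.integral_sub hTii hUii]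
  linarith [hmain']
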